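/- For fixed prime p, positive integer d coprime to p, and 1 ≤ i ≤ p−1, there exists N such that σ_p(d, i, n) = 0 for all n ≥ N; consequently ⌊id/p⌋ − ⌊id/p^{n+1}⌋ − σ_p(d,i,n) = ⌊id/p⌋ for all sufficiently large n. -/

import Mathlib

/-- `sigmaP p d i n` is the number of integers `0 < l ≤ ⌈id/p⌉` with `l ≢ 1 (mod p^n)` such
that the first `n` digits of the `p`-adic expansion of `(1-l)/d ∈ ℤ_p` sum to at most
`p - 1 - i`. The integer `c` formed by these first `n` digits is characterized by
`0 ≤ c < p^n` and `d·c ≡ 1 - l (mod p^n)` (this uses `p ∤ d`). -/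
noncomputable def sigmaP (p d i n : ℕ) : ℕ :=
  Nat.card {l : ℤ // 0 < l ∧ l ≤ ⌈(i * d : ℚ) / p⌉ ∧ ¬ ((p : ℤ) ^ n ∣ l - 1) ∧
    ∃ c : ℕ, c < p ^ n ∧ (p : ℤ) ^ n ∣ ((d : ℤ) * c - (1 - l)) ∧
      (Nat.digits p c).sum ≤ p - 1 - i}

private lemma digits_len_le_of_lt_pow {b n e : ℕ} (hb : 1 < b) (h : n < b ^ e) :
    (Nat.digits b n).length ≤ e := by
  by_contra hlen
  push_neg at hlen
  rcases Nat.eq_zero_or_pos n with rfl | hn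
  · simp at hlen
  have h1 : b ^ (Nat.digits b n).length ≤ b * n :=
    Nat.base_pow_length_digits_le b n hb hn.ne'
  have h2 : b ^ (e + 1) ≤ b ^ (Nat.digits b n).length :=
    Nat.pow_le_pow_right (by omega) hlen
  rw [pow_succ'] at h2
  have h3 := le_trans h2 h1
  have h4 := Nat.le_of_mul_le_mul_left h3 (by omega)
  omega

private lemma one_le_sum_digits {b m : ℕ} (hb : 1 < b) (hm : m ≠ 0) :
    1 ≤ (Nat.digits b m).sum := by
  have hne : Nat.digits b m ≠ [] := Nat.digits_ne_nil_iff_ne_zero.mpr hm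
  have hlast := Nat.getLast_digit_ne_zero b hm
  have hmem : (Nat.digits b m).getLast hne ∈ Nat.digits b m := List.getLast_mem hne
  have := List.single_le_sum (fun x _ => Nat.zero_le x) _ hmem
  omega

private lemma sum_digits_mod_add_div {b : ℕ} (hb : 1 < b) (e n : ℕ) :
    (Nat.digits b (n % b ^ e)).sum + (Nat.digits b (n / b ^ e)).sum = (Nat.digits b n).sum := by
  rcases Nat.eq_zero_or_pos (n / b ^ e) with h | h
  · have hlt : n < b ^ e := by
      have h1 := Nat.mod_add_div n (b ^ e)
      have h2 : n % b ^ e < b ^ e := Nat.mod_lt _ (pow_pos (by omega) e)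
      rw [h] at h1
      omega
    rw [h, Nat.mod_eq_of_lt hlt]
    simp
  · set a := n % b ^ e with ha
    set m := n / b ^ e with hm
    have hae : a < b ^ e := Nat.mod_lt _ (pow_pos (by omega) e)
    have hL : (Nat.digits b a).length ≤ e := digits_len_le_of_lt_pow hb hae
    have hn : n = a + b ^ (Nat.digits b a).length * (b ^ (e - (Nat.digits b a).length) * m) := by
      have : b ^ (Nat.digits b a).length * (b ^ (e - (Nat.digits b a).length) * m)
          = b ^ e * m := by
        rw [← mul_assoc, ← pow_add]
        congr 2
        omega
      rw [this, ha, hm]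
      exact (Nat.mod_add_div n (b ^ e)).symm
    have happ := Nat.digits_append_digits (b := b) (n := a)
      (m := b ^ (e - (Nat.digits b a).length) * m) (by omega)
    rw [hn, ← happ, List.sum_append,
      Nat.digits_base_pow_mul hb h]
    simp

/-- for fixed prime `p`, `d > 0` coprime to `p`, and `1 ≤ i ≤ p-1`, there is
`N` with `σ_p(d,i,n) = 0` for all `n ≥ N`; consequently
`⌊id/p⌋ - ⌊id/p^{n+1}⌋ - σ_p(d,i,n) = ⌊id/p⌋` for all sufficiently large `n`. -/
theorem sigmaP_eventually_zero (p d i : ℕ) (hp : p.Prime) (hd : 0 < d) (hpd : ¬ p ∣ d)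
    (hi1 : 1 ≤ i) (hi2 : i ≤ p - 1) :
    ∃ N : ℕ, ∀ n : ℕ, N ≤ n → sigmaP p d i n = 0 ∧
      ⌊(i * d : ℚ) / p⌋ - ⌊(i * d : ℚ) / (p : ℚ) ^ (n + 1)⌋ - (sigmaP p d i n : ℤ)
        = ⌊(i * d : ℚ) / p⌋ := by
  have hp2 : 2 ≤ p := hp.two_le
  set M : ℕ := (⌈(i * d : ℚ) / p⌉).toNat with hM
  set k : ℕ := d + M + 2 with hk
  have hpk : d + M + 2 ≤ p ^ k := by
    have := Nat.lt_pow_self (by omega : 1 < p) (n := k)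
    omega
  refine ⟨k * p + i * d, fun n hn => ?_⟩
  -- first: emptiness of the subtype
  have hempty : IsEmpty {l : ℤ // 0 < l ∧ l ≤ ⌈(i * d : ℚ) / p⌉ ∧ ¬ ((p : ℤ) ^ n ∣ l - 1) ∧
      ∃ c : ℕ, c < p ^ n ∧ (p : ℤ) ^ n ∣ ((d : ℤ) * c - (1 - l)) ∧
        (Nat.digits p c).sum ≤ p - 1 - i} := by
    rw [isEmpty_subtype]
    rintro l ⟨hl0, hlM, hlnd, c, hc, hdvd, hsum⟩
    have hl2 : 2 ≤ l := by
      rcases eq_or_lt_of_le (show (0:ℤ) + 1 ≤ l by omega) with h | h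
      · exact absurd ⟨0, by omega⟩ hlnd
      · omega
    have hlM' : l ≤ (M : ℤ) := by
      have : (0 : ℤ) < ⌈(i * d : ℚ) / p⌉ := lt_of_lt_of_le hl0 hlM
      rw [hM, Int.toNat_of_nonneg this.le]
      exact hlM
    -- the key induction
    have key : ∀ j : ℕ, j * k ≤ n → (j : ℕ) ≤ (Nat.digits p (c % p ^ (j * k))).sum := by
      intro j
      induction j with
      | zero => intro _; simp
      | succ j ih =>
        intro hjk
        have hjk' : j * k ≤ n := by nlinarith
        set e : ℕ := j * k with he
        set e' : ℕ := (j + 1) * k with he'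
        have hee' : e + k = e' := by ring
        set a : ℕ := c % p ^ e' with ha
        have hdvd' : (p : ℤ) ^ e' ∣ ((d : ℤ) * a - (1 - l)) := by
          have h1 : (p : ℤ) ^ e' ∣ (p : ℤ) ^ n := pow_dvd_pow _ hjk
          have h2 : (p : ℤ) ^ e' ∣ ((c : ℤ) - (a : ℤ)) := by
            have hle : a ≤ c := Nat.mod_le c _
            have hdn : p ^ e' ∣ c - a := ha ▸ Nat.dvd_sub_mod c
            rw [← Nat.cast_sub hle]
            exact_mod_cast Int.natCast_dvd_natCast.mpr hdn
        -- d*a - (1-l) = (d*c - (1-l)) - d*(c - a)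
          have : (d : ℤ) * a - (1 - l) = ((d : ℤ) * c - (1 - l)) - d * ((c : ℤ) - a) := by ring
          rw [this]
          exact dvd_sub (h1.trans hdvd) (Dvd.dvd.mul_left h2 _)
        have hpos : (0 : ℤ) < (d : ℤ) * a - (1 - l) := by
          have : (0 : ℤ) ≤ (d : ℤ) * a := by positivity
          omega
        have hge : ((p : ℤ)) ^ e' ≤ (d : ℤ) * a - (1 - l) := Int.le_of_dvd hpos hdvd'
        have hpe' : (p : ℕ) ^ e' = p ^ e * p ^ k := by rw [← pow_add, hee']
        have hape : p ^ e ≤ a := by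
          -- from d * a ≥ p^e' + 1 - l ≥ p^e * (d + M + 2) - M
          by_contra hlt
          push_neg at hlt
          have h1 : (d : ℤ) * a ≥ (p : ℤ) ^ e' + 1 - l := by omega
          have h2 : (l : ℤ) ≤ M := hlM'
          have hpene : (1 : ℕ) ≤ p ^ e := Nat.one_le_pow _ _ (by omega)
          have h3 : (p : ℕ) ^ e' ≥ p ^ e * (d + M + 2) :=
            hpe' ▸ Nat.mul_le_mul_left _ hpk
          have h4 : (d : ℤ) * a ≤ (d : ℤ) * (p ^ e - 1) := by
            have : (a : ℤ) ≤ (p : ℤ) ^ e - 1 := by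
              have : (a : ℤ) < (p : ℤ) ^ e := by exact_mod_cast hlt
              omega
            exact mul_le_mul_of_nonneg_left this (by positivity)
          have h5 : ((p : ℤ)) ^ e' ≥ (p : ℤ) ^ e * (d + M + 2) := by exact_mod_cast h3
          have h6 : (1 : ℤ) ≤ (p : ℤ) ^ e := by exact_mod_cast hpene
          nlinarith
        have hane : a / p ^ e ≠ 0 := by
          have : 1 ≤ a / p ^ e := (Nat.one_le_div_iff (pow_pos (by omega) e)).mpr hape
          omega
        have hmm : a % p ^ e = c % p ^ e := by
          rw [ha]
          exact Nat.mod_mod_of_dvd c (pow_dvd_pow p (by omega))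
        have hsplit := sum_digits_mod_add_div (b := p) (by omega) e a
        have h1 : 1 ≤ (Nat.digits p (a / p ^ e)).sum := one_le_sum_digits (by omega) hane
        have h2 := ih hjk'
        rw [hmm] at hsplit
        omega
    have hfin := key (p - 1) (by nlinarith [Nat.sub_le p 1])
    have hmono : (Nat.digits p (c % p ^ ((p - 1) * k))).sum ≤ (Nat.digits p c).sum := by
      have := sum_digits_mod_add_div (b := p) (by omega) ((p - 1) * k) c
      omega
    omega
  have hcard : sigmaP p d i n = 0 := by
    rw [sigmaP]
    exact Nat.card_of_isEmpty
  refine ⟨hcard, ?_⟩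
  have hfloor : ⌊(i * d : ℚ) / (p : ℚ) ^ (n + 1)⌋ = 0 := by
    rw [Int.floor_eq_zero_iff]
    constructor
    · positivity
    · rw [div_lt_one (by positivity)]
      have hnat : i * d < p ^ (n + 1) := by
        calc i * d ≤ n := by omega
        _ < 2 ^ (n + 1) := by
            calc n < 2 ^ n := Nat.lt_two_pow_self (n := n)
            _ ≤ 2 ^ (n + 1) := Nat.pow_le_pow_right (by omega) (by omega)
        _ ≤ p ^ (n + 1) := Nat.pow_le_pow_left hp2 _
      exact_mod_cast hnat
  rw [hcard, hfloor]
  simp
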